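/- Let A be an n × n {+1,-1}-matrix and m an integer with n ≥ m > 1. Let Y(m,A) denote the number of m × m submatrices of A with nonzero determinant (counted over all C(n,m)² choices of row and column index sets). Then 4^(m-1) · Y(m,A) ≤ n^m · C(n,m); equivalently Y(m,A) ≤ 4·(n/4)^m·C(n,m). -/

import Mathlib

open Matrix
open Finset Equiv Equiv.Perm Function


section Aux

variable {R : Type*} [CommRing R]

/-- A strictly monotone permutation of `Fin m` is the identity. -/
lemma perm_strictMono_eq_one {m : ℕ} (ρ : Equiv.Perm (Fin m)) (h : StrictMono ⇑ρ) : ρ = 1 := by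
  haveI : WellFoundedLT (Fin m) := Finite.to_wellFoundedLT
  have hinv : StrictMono ⇑ρ⁻¹ := by
    intro i j hij
    have h4 : ρ (ρ⁻¹ i) < ρ (ρ⁻¹ j) := by simpa using hij
    exact h.lt_iff_lt.mp h4
  ext i
  have h1 : i ≤ ρ i := h.le_apply
  have h2 : ρ i ≤ i := by simpa using hinv.le_apply (x := ρ i)
  simpa using congrArg Fin.val (le_antisymm h2 h1)

/-- Factorization of injective tuples as strictly monotone map composed with a permutation. -/
def injFactor (m n : ℕ) :
    {g : Fin m → Fin n // StrictMono g} × Equiv.Perm (Fin m) ≃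
      {p : Fin m → Fin n // Function.Injective p} where
  toFun x := ⟨x.1.1 ∘ x.2, x.1.2.injective.comp x.2.injective⟩
  invFun p :=
    ⟨⟨p.1 ∘ Tuple.sort p.1,
      (Tuple.monotone_sort p.1).strictMono_of_injective
        (p.2.comp (Tuple.sort p.1).injective)⟩, (Tuple.sort p.1)⁻¹⟩
  left_inv := by
    rintro ⟨⟨g, hg⟩, σ⟩
    set p : Fin m → Fin n := g ∘ σ with hp
    set τ := Tuple.sort p with hτ
    have hmono : StrictMono (p ∘ ⇑τ) :=
      (Tuple.monotone_sort p).strictMono_of_injective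
        ((hg.injective.comp σ.injective).comp τ.injective)
    have hfun : p ∘ ⇑τ = g ∘ ⇑(σ * τ) := by
      funext i; simp [hp, Equiv.Perm.mul_apply, Function.comp]
    have hρ : StrictMono ⇑(σ * τ) := by
      intro i j hij
      have := hmono hij
      rw [hfun] at this
      exact (hg.lt_iff_lt).mp this
    have hone : σ * τ = 1 := perm_strictMono_eq_one _ hρ
    have hτσ : τ = σ⁻¹ := by
      have h5 : σ⁻¹ * (σ * τ) = σ⁻¹ * 1 := by rw [hone]
      simpa [← mul_assoc] using h5
    refine Prod.ext ?_ ?_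
    · apply Subtype.ext
      show p ∘ ⇑τ = g
      rw [hfun, hone]; funext i; simp
    · show τ⁻¹ = σ
      rw [hτσ]; simp
  right_inv := by
    rintro ⟨p, hp⟩
    apply Subtype.ext
    show (p ∘ ⇑(Tuple.sort p)) ∘ ⇑(Tuple.sort p)⁻¹ = p
    funext i
    simp [Function.comp, Equiv.Perm.inv_def, Equiv.apply_symm_apply]

/-- Strictly monotone maps correspond to subsets. -/
def strictMonoEquivFinset (m n : ℕ) :
    {g : Fin m → Fin n // StrictMono g} ≃ {s : Finset (Fin n) // s.card = m} where
  toFun g := ⟨Finset.image g.1 Finset.univ, by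
    rw [Finset.card_image_of_injective _ g.2.injective, Finset.card_univ, Fintype.card_fin]⟩
  invFun s := ⟨⇑(s.1.orderEmbOfFin s.2), (s.1.orderEmbOfFin s.2).strictMono⟩
  left_inv g := Subtype.ext
    (Finset.orderEmbOfFin_unique _ (fun x => Finset.mem_image_of_mem _ (Finset.mem_univ x))
      g.2).symm
  right_inv s := Subtype.ext (by
    apply Finset.coe_injective
    rw [Finset.coe_image, Finset.coe_univ, Set.image_univ, Finset.range_orderEmbOfFin])

lemma card_strictMonoFun (m n : ℕ) :
    Fintype.card {g : Fin m → Fin n // StrictMono g} = n.choose m := by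
  rw [Fintype.card_congr (strictMonoEquivFinset m n), Fintype.card_finset_len, Fintype.card_fin]

/-- Cauchy–Binet formula. -/
theorem cauchy_binet {m n : ℕ} (B : Matrix (Fin m) (Fin n) R) (C : Matrix (Fin n) (Fin m) R) :
    det (B * C) = ∑ g : {g : Fin m → Fin n // StrictMono g},
      det (B.submatrix id g.1) * det (C.submatrix g.1 id) := by
  have key : ∀ (g : Fin m → Fin n) (σ : Equiv.Perm (Fin m)),
      det (B.submatrix id (g ∘ ⇑σ)) = ((Equiv.Perm.sign σ : ℤ) : R) * det (B.submatrix id g) := by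
    intro g σ
    have : B.submatrix id (g ∘ ⇑σ) = (B.submatrix id g).submatrix id ⇑σ := by
      rw [Matrix.submatrix_submatrix]; rfl
    rw [this, Matrix.det_permute']
  calc det (B * C)
      = ∑ p : Fin m → Fin n, ∑ σ : Equiv.Perm (Fin m),
          ((Equiv.Perm.sign σ : ℤ) : R) * ∏ i, B (σ i) (p i) * C (p i) i := by
        simp only [det_apply', Matrix.mul_apply, Finset.prod_univ_sum, Finset.mul_sum,
          Fintype.piFinset_univ]
        rw [Finset.sum_comm]
    _ = ∑ p : Fin m → Fin n, det (B.submatrix id p) * ∏ i, C (p i) i := by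
        refine Finset.sum_congr rfl fun p _ => ?_
        rw [det_apply', Finset.sum_mul]
        refine Finset.sum_congr rfl fun σ _ => ?_
        rw [Finset.prod_mul_distrib, ← mul_assoc]
        rfl
    _ = ∑ p ∈ Finset.univ.filter (fun p : Fin m → Fin n => Function.Injective p),
          det (B.submatrix id p) * ∏ i, C (p i) i := by
        symm
        apply Finset.sum_subset (Finset.filter_subset _ _)
        intro p _ hp
        have hpi : ¬ Function.Injective p := by simpa using hp
        obtain ⟨i, j, hij, hne⟩ := Function.not_injective_iff.mp hpi
        rw [Matrix.det_zero_of_column_eq hne (fun k => by simp [Matrix.submatrix_apply, hij]),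
          zero_mul]
    _ = ∑ p : {p : Fin m → Fin n // Function.Injective p},
          det (B.submatrix id p.1) * ∏ i, C (p.1 i) i := by
        rw [← Finset.sum_subtype (Finset.univ.filter fun p : Fin m → Fin n =>
          Function.Injective p) (fun p => by simp) (fun p => det (B.submatrix id p) * ∏ i, C (p i) i)]
    _ = ∑ x : {g : Fin m → Fin n // StrictMono g} × Equiv.Perm (Fin m),
          det (B.submatrix id (x.1.1 ∘ ⇑x.2)) * ∏ i, C (x.1.1 (x.2 i)) i := by
        rw [← Equiv.sum_comp (injFactor m n)
          (fun p => det (B.submatrix id p.1) * ∏ i, C (p.1 i) i)]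
        rfl
    _ = ∑ g : {g : Fin m → Fin n // StrictMono g},
          det (B.submatrix id g.1) * det (C.submatrix g.1 id) := by
        rw [Fintype.sum_prod_type]
        refine Finset.sum_congr rfl fun g _ => ?_
        rw [det_apply' (C.submatrix g.1 id), Finset.mul_sum]
        refine Finset.sum_congr rfl fun σ _ => ?_
        rw [key]
        simp only [Matrix.submatrix_apply, id_eq]
        ring

end Aux

/-- The determinant of a `±1` matrix is divisible by `2^(m-1)`. -/
theorem det_pm_one_dvd {m : ℕ} (hm : 0 < m) (M : Matrix (Fin m) (Fin m) ℤ)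
    (h : ∀ i j, M i j = 1 ∨ M i j = -1) : (2:ℤ)^(m-1) ∣ M.det := by
  set i0 : Fin m := ⟨0, hm⟩ with hi0
  set P : Matrix (Fin m) (Fin m) ℤ :=
    Matrix.of (fun i j => if j = i0 then M i i0 else M i j - M i i0) with hP
  have hdetP : M.det = P.det := by
    have h4 : Mᵀ.det = Pᵀ.det := by
      apply Matrix.det_eq_of_forall_row_eq_smul_add_const
        (c := fun j => if j = i0 then 0 else 1) (k := i0) (by simp)
      intro i j
      by_cases hj : i = i0 <;> simp [hP, hj, Matrix.transpose_apply]
    rwa [Matrix.det_transpose, Matrix.det_transpose] at h4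
  set N : Matrix (Fin m) (Fin m) ℤ :=
    Matrix.of (fun i j => if j = i0 then M i i0
      else if M i j = M i i0 then 0 else M i j) with hN
  set d : Fin m → ℤ := fun j => if j = i0 then 1 else 2 with hd
  have hPN : P = N * Matrix.diagonal d := by
    ext i j
    rw [Matrix.mul_diagonal]
    by_cases hj : j = i0
    · simp [hP, hN, hd, hj]
    · simp only [hP, hN, hd, Matrix.of_apply, if_neg hj]
      rcases h i j with h1 | h1 <;> rcases h i i0 with h2 | h2 <;>
        simp [h1, h2]
  have hdiag : (Matrix.diagonal d).det = 2^(m-1) := by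
    rw [Matrix.det_diagonal]
    rw [← Finset.mul_prod_erase Finset.univ d (Finset.mem_univ i0)]
    have h2 : ∀ j ∈ Finset.univ.erase i0, d j = 2 := by
      intro j hj
      simp [hd, (Finset.mem_erase.mp hj).1]
    rw [Finset.prod_congr rfl h2, Finset.prod_const, Finset.card_erase_of_mem (Finset.mem_univ _),
      Finset.card_univ, Fintype.card_fin]
    simp [hd, hi0]
  rw [hdetP, hPN, Matrix.det_mul, hdiag]
  exact dvd_mul_left _ _

/-- Gram determinant bound for `±1` matrices. -/
theorem gram_det_le {m n : ℕ} (hm : 0 < m) (B : Matrix (Fin m) (Fin n) ℝ)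
    (hB : ∀ i j, B i j = 1 ∨ B i j = -1) : (B * Bᵀ).det ≤ (n:ℝ)^m := by
  have hps : (B * Bᵀ).PosSemidef := by
    have := Matrix.posSemidef_self_mul_conjTranspose B
    simpa using this
  have hherm := hps.1
  have hdiag : ∀ i, (B * Bᵀ) i i = (n:ℝ) := by
    intro i
    rw [Matrix.mul_apply]
    have h1 : ∀ j, B i j * B i j = 1 := by
      intro j
      rcases hB i j with h1 | h1 <;> simp [h1]
    simp [Matrix.transpose_apply, h1]
  have htrace : ∑ i, hherm.eigenvalues i = (m:ℝ) * n := by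
    have h2 : (B * Bᵀ).trace = (m:ℝ) * n := by
      rw [Matrix.trace]
      simp only [Matrix.diag_apply, hdiag, Finset.sum_const, Finset.card_univ, Fintype.card_fin,
        nsmul_eq_mul]
    have h3 : (B * Bᵀ).trace = ∑ i, hherm.eigenvalues i := by
      conv_lhs => rw [hherm.spectral_theorem]
      rw [Unitary.conjStarAlgAut_apply, Matrix.trace_mul_cycle]
      rw [(Matrix.mem_unitaryGroup_iff').mp (hherm.eigenvectorUnitary).2, Matrix.one_mul,
        Matrix.trace_diagonal]
      simp
    rw [← h3, h2]
  have hnn : ∀ i, 0 ≤ hherm.eigenvalues i := hps.eigenvalues_nonneg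
  have hmR : (0:ℝ) < (m:ℝ) := by exact_mod_cast hm
  have amgm := Real.geom_mean_le_arith_mean_weighted Finset.univ (fun _ => (m:ℝ)⁻¹)
    hherm.eigenvalues (fun _ _ => by positivity)
    (by simp [Finset.card_univ]; field_simp) (fun i _ => hnn i)
  have hsum : ∑ i, (m:ℝ)⁻¹ * hherm.eigenvalues i = (n:ℝ) := by
    rw [← Finset.mul_sum, htrace]
    field_simp
  rw [hsum] at amgm
  have hdet : (B * Bᵀ).det = ∏ i, hherm.eigenvalues i := by
    rw [hherm.det_eq_prod_eigenvalues]
    norm_num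
  have hprod : ∏ i, hherm.eigenvalues i = (∏ i, hherm.eigenvalues i ^ (m:ℝ)⁻¹)^m := by
    rw [← Finset.prod_pow]
    refine Finset.prod_congr rfl fun i _ => ?_
    rw [← Real.rpow_natCast (hherm.eigenvalues i ^ (m:ℝ)⁻¹) m, ← Real.rpow_mul (hnn i)]
    rw [inv_mul_cancel₀ (ne_of_gt hmR), Real.rpow_one]
  rw [hdet, hprod]
  apply pow_le_pow_left₀ _ amgm
  exact Finset.prod_nonneg fun i _ => Real.rpow_nonneg (hnn i) _

theorem det_sq_ge {m : ℕ} (hm : 0 < m) (M : Matrix (Fin m) (Fin m) ℤ)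
    (h : ∀ i j, M i j = 1 ∨ M i j = -1) (hne : M.det ≠ 0) :
    (4:ℤ)^(m-1) ≤ M.det ^ 2 := by
  have hdvd : (2:ℤ)^(m-1) ∣ M.det := det_pm_one_dvd hm M h
  have habs : (2:ℤ)^(m-1) ≤ |M.det| :=
    Int.le_of_dvd (abs_pos.mpr hne) ((dvd_abs _ _).mpr hdvd)
  have h4 : (4:ℤ)^(m-1) = ((2:ℤ)^(m-1))^2 := by
    rw [show (4:ℤ) = 2^2 by norm_num, ← pow_mul, ← pow_mul, mul_comm]
  rw [h4, ← sq_abs (M.det)]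
  exact pow_le_pow_left₀ (by positivity) habs 2

/-- Per-row-set bound. -/
theorem per_row_bound {n m : ℕ} (hm : 0 < m) (A : Matrix (Fin n) (Fin n) ℤ)
    (hA : ∀ i j, A i j = 1 ∨ A i j = -1) (f : Fin m → Fin n) :
    (4:ℤ)^(m-1) *
      ((Finset.univ.filter
        (fun g : {g : Fin m → Fin n // StrictMono g} => (A.submatrix f g.1).det ≠ 0)).card)
      ≤ (n:ℤ)^m := by
  set B : Matrix (Fin m) (Fin n) ℤ := A.submatrix f id with hB
  have hBentries : ∀ i j, B i j = 1 ∨ B i j = -1 := fun i j => hA (f i) j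
  have hgram : (B * Bᵀ).det ≤ (n:ℤ)^m := by
    have hcast : (((B * Bᵀ).det : ℤ) : ℝ) =
        ((B.map (Int.cast : ℤ → ℝ)) * (B.map (Int.cast : ℤ → ℝ))ᵀ).det := by
      have h0 := RingHom.map_det (Int.castRingHom ℝ) (B * Bᵀ)
      rw [RingHom.mapMatrix_apply] at h0
      have h1 : (((B * Bᵀ).det : ℤ) : ℝ) = (Int.castRingHom ℝ) (B * Bᵀ).det := rfl
      rw [h1, h0]
      have h2 : (B * Bᵀ).map ⇑(Int.castRingHom ℝ) =
          (B.map ⇑(Int.castRingHom ℝ)) * (Bᵀ.map ⇑(Int.castRingHom ℝ)) := Matrix.map_mul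
      rw [h2]
      have h3 : Bᵀ.map ⇑(Int.castRingHom ℝ) = (B.map ⇑(Int.castRingHom ℝ))ᵀ :=
        Matrix.transpose_map.symm
      rw [h3]
      rfl
    have hle := gram_det_le hm (B.map (Int.cast : ℤ → ℝ))
      (fun i j => by rcases hBentries i j with h | h <;> simp [Matrix.map_apply, h])
    rw [← hcast] at hle
    exact_mod_cast hle
  have hsq : (B * Bᵀ).det = ∑ g : {g : Fin m → Fin n // StrictMono g},
      (B.submatrix id g.1).det ^ 2 := by
    rw [cauchy_binet B Bᵀ]
    refine Finset.sum_congr rfl fun g _ => ?_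
    have htr : Bᵀ.submatrix g.1 id = (B.submatrix id g.1)ᵀ := rfl
    rw [htr, Matrix.det_transpose, sq]
  have hlow : (4:ℤ)^(m-1) *
      ((Finset.univ.filter
        (fun g : {g : Fin m → Fin n // StrictMono g} => (A.submatrix f g.1).det ≠ 0)).card)
      ≤ ∑ g : {g : Fin m → Fin n // StrictMono g}, (B.submatrix id g.1).det ^ 2 := by
    have h1 : (4:ℤ)^(m-1) *
        ((Finset.univ.filter
          (fun g : {g : Fin m → Fin n // StrictMono g} => (A.submatrix f g.1).det ≠ 0)).card)
        = ∑ _g ∈ (Finset.univ.filter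
          (fun g : {g : Fin m → Fin n // StrictMono g} => (A.submatrix f g.1).det ≠ 0)),
            (4:ℤ)^(m-1) := by
      rw [Finset.sum_const, nsmul_eq_mul, mul_comm]
    rw [h1]
    refine le_trans (Finset.sum_le_sum ?_) (Finset.sum_le_sum_of_subset_of_nonneg
      (Finset.filter_subset _ _) (fun g _ _ => sq_nonneg _))
    intro g hg
    have hne : (A.submatrix f g.1).det ≠ 0 := (Finset.mem_filter.mp hg).2
    have hsubeq : B.submatrix id g.1 = A.submatrix f g.1 := rfl
    rw [hsubeq]
    exact det_sq_ge hm (A.submatrix f g.1) (fun i j => hA _ _) hne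
  calc (4:ℤ)^(m-1) * _ ≤ _ := hlow
    _ = (B * Bᵀ).det := hsq.symm
    _ ≤ (n:ℤ)^m := hgram


/-- For an `n × n` `{±1}`-matrix `A` and `n ≥ m > 1`, the number `Y(m,A)` of
`m × m` submatrices with nonzero determinant (over all pairs of strictly
monotone index maps `Fin m → Fin n`) satisfies `4^(m-1) * Y(m,A) ≤ n^m * C(n,m)`. -/
theorem nonzero_minors_count_le (n m : ℕ) (hm : 1 < m) (hmn : m ≤ n)
    (A : Matrix (Fin n) (Fin n) ℤ) (hA : ∀ i j, A i j = 1 ∨ A i j = -1) :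
    4 ^ (m - 1) *
      (Finset.univ.filter
        (fun p : {f : Fin m → Fin n // StrictMono f} × {g : Fin m → Fin n // StrictMono g} =>
          (A.submatrix p.1.1 p.2.1).det ≠ 0)).card ≤ n ^ m * n.choose m := by
  have hm0 : 0 < m := by omega
  have hsplit : (Finset.univ.filter
        (fun p : {f : Fin m → Fin n // StrictMono f} × {g : Fin m → Fin n // StrictMono g} =>
          (A.submatrix p.1.1 p.2.1).det ≠ 0)).card
      = ∑ f : {f : Fin m → Fin n // StrictMono f},
          (Finset.univ.filter
            (fun g : {g : Fin m → Fin n // StrictMono g} =>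
              (A.submatrix f.1 g.1).det ≠ 0)).card := by
    rw [Finset.card_filter, Fintype.sum_prod_type]
    refine Finset.sum_congr rfl fun f _ => ?_
    rw [Finset.card_filter]
  rw [hsplit, Finset.mul_sum]
  have hbound : ∀ f : {f : Fin m → Fin n // StrictMono f},
      4 ^ (m - 1) * (Finset.univ.filter
        (fun g : {g : Fin m → Fin n // StrictMono g} =>
          (A.submatrix f.1 g.1).det ≠ 0)).card ≤ n ^ m := by
    intro f
    have := per_row_bound hm0 A hA f.1
    exact_mod_cast this
  calc ∑ f : {f : Fin m → Fin n // StrictMono f},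
        4 ^ (m - 1) * (Finset.univ.filter
          (fun g : {g : Fin m → Fin n // StrictMono g} =>
            (A.submatrix f.1 g.1).det ≠ 0)).card
      ≤ ∑ _f : {f : Fin m → Fin n // StrictMono f}, n ^ m :=
        Finset.sum_le_sum fun f _ => hbound f
    _ = n ^ m * n.choose m := by
        rw [Finset.sum_const, Finset.card_univ, card_strictMonoFun, smul_eq_mul, mul_comm]
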